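/- Let L be a Lie algebra over a field k with k-subspaces L₋₁, L₀, L₁ satisfying L = L₋₁ + L₀ + L₁ and ⁅Lᵢ, Lⱼ⁆ ⊆ L_{i+j} (where L_m = 0 for |m| ≥ 2), and let V be a module over the Lie algebra L. Let W ⊆ V be a k-subspace with L₀·W ⊆ W and L₋₁·W = 0. Define inductively W₀ := W and W_{j+1} := span_k { z·w : z ∈ L₁, w ∈ Wⱼ }. Then the subspace U := Σ_{j ≥ 0} Wⱼ is an L-submodule of V, i.e. x·u ∈ U for all x ∈ L and u ∈ U. In particular, if V is an irreducible L-module (its only L-submodules are 0 and V) and W ≠ 0, then U = V. -/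

import Mathlib

/-- The inductively defined sequence of subspaces `W₀ := W`,
`W_{j+1} := span { z·w : z ∈ L₁, w ∈ Wⱼ }`. -/
def Wseq (k L V : Type*) [Field k] [LieRing L] [LieAlgebra k L]
    [AddCommGroup V] [Module k V] [LieRingModule L V] [LieModule k L V]
    (Lpos : Submodule k L) (W : Submodule k V) : ℕ → Submodule k V
  | 0 => W
  | j + 1 => Submodule.span k {v : V | ∃ z ∈ Lpos, ∃ w ∈ Wseq k L V Lpos W j, ⁅z, w⁆ = v}

/-- Let `L = L₋₁ + L₀ + L₁` be a graded Lie algebra over a field `k`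
with `⁅Lᵢ, Lⱼ⁆ ⊆ L_{i+j}`, let `V` be an `L`-module and `W ⊆ V` a subspace with
`L₀·W ⊆ W` and `L₋₁·W = 0`.  With `W₀ := W` and `W_{j+1} := span { z·w : z ∈ L₁, w ∈ Wⱼ }`,
the subspace `U := Σ_{j ≥ 0} Wⱼ` is an `L`-submodule of `V`.  In particular, if `V` is
irreducible and `W ≠ 0`, then `U = V`. -/
theorem stmt_9 (k L V : Type*) [Field k] [LieRing L] [LieAlgebra k L]
    [AddCommGroup V] [Module k V] [LieRingModule L V] [LieModule k L V]
    (Lneg Lzero Lpos : Submodule k L)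
    (hsum : Lneg ⊔ Lzero ⊔ Lpos = ⊤)
    (hnn : ∀ x ∈ Lneg, ∀ y ∈ Lneg, ⁅x, y⁆ = (0 : L))
    (hnz : ∀ x ∈ Lneg, ∀ y ∈ Lzero, ⁅x, y⁆ ∈ Lneg)
    (hnp : ∀ x ∈ Lneg, ∀ y ∈ Lpos, ⁅x, y⁆ ∈ Lzero)
    (hzz : ∀ x ∈ Lzero, ∀ y ∈ Lzero, ⁅x, y⁆ ∈ Lzero)
    (hzp : ∀ x ∈ Lzero, ∀ y ∈ Lpos, ⁅x, y⁆ ∈ Lpos)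
    (hpp : ∀ x ∈ Lpos, ∀ y ∈ Lpos, ⁅x, y⁆ = (0 : L))
    (W : Submodule k V)
    (hWzero : ∀ x ∈ Lzero, ∀ w ∈ W, ⁅x, w⁆ ∈ W)
    (hWneg : ∀ x ∈ Lneg, ∀ w ∈ W, ⁅x, w⁆ = (0 : V)) :
    (∀ x : L, ∀ u ∈ ⨆ j : ℕ, Wseq k L V Lpos W j, ⁅x, u⁆ ∈ ⨆ j : ℕ, Wseq k L V Lpos W j) ∧
    ((∀ U' : Submodule k V, (∀ x : L, ∀ v ∈ U', ⁅x, v⁆ ∈ U') → U' = ⊥ ∨ U' = ⊤) →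
      W ≠ ⊥ → (⨆ j : ℕ, Wseq k L V Lpos W j) = ⊤) := by
  set Ws : ℕ → Submodule k V := Wseq k L V Lpos W with hWs
  -- positive action
  have hpos : ∀ j, ∀ z ∈ Lpos, ∀ w ∈ Ws j, ⁅z, w⁆ ∈ Ws (j + 1) := by
    intro j z hz w hw
    exact Submodule.subset_span ⟨z, hz, w, hw, rfl⟩
  -- a convenient span-induction principle for membership of ⁅x, ·⁆ in a submodule
  have key : ∀ (x : L) (j : ℕ) (P : Submodule k V),
      (∀ z ∈ Lpos, ∀ w ∈ Ws j, ⁅x, ⁅z, w⁆⁆ ∈ P) →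
      ∀ v ∈ Ws (j + 1), ⁅x, v⁆ ∈ P := by
    intro x j P hgen v hv
    have : Ws (j + 1) ≤ Submodule.comap (LieModule.toEnd k L V x) P := by
      show Submodule.span k _ ≤ _
      rw [Submodule.span_le]
      rintro _ ⟨z, hz, w, hw, rfl⟩
      exact hgen z hz w hw
    exact this hv
  -- zero action preserves each Wⱼ
  have hzero : ∀ j, ∀ x ∈ Lzero, ∀ w ∈ Ws j, ⁅x, w⁆ ∈ Ws j := by
    intro j
    induction j with
    | zero => exact hWzero
    | succ j ih =>
      intro x hx v hv
      refine key x j (Ws (j + 1)) ?_ v hv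
      intro z hz w hw
      have : ⁅x, ⁅z, w⁆⁆ = ⁅(⁅x, z⁆ : L), w⁆ + ⁅z, ⁅x, w⁆⁆ := by
        rw [leibniz_lie]
      rw [this]
      exact add_mem (hpos j _ (hzp x hx z hz) w hw) (hpos j z hz _ (ih x hx w hw))
  -- negative action lowers degree (to 0 at level 0)
  have hneg : ∀ j, ∀ x ∈ Lneg, ∀ w ∈ Ws (j + 1), ⁅x, w⁆ ∈ Ws j := by
    intro j
    induction j with
    | zero =>
      intro x hx v hv
      refine key x 0 (Ws 0) ?_ v hv
      intro z hz w hw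
      have : ⁅x, ⁅z, w⁆⁆ = ⁅(⁅x, z⁆ : L), w⁆ + ⁅z, ⁅x, w⁆⁆ := by rw [leibniz_lie]
      rw [this, hWneg x hx w hw, lie_zero, add_zero]
      exact hWzero _ (hnp x hx z hz) w hw
    | succ j ih =>
      intro x hx v hv
      refine key x (j + 1) (Ws (j + 1)) ?_ v hv
      intro z hz w hw
      have : ⁅x, ⁅z, w⁆⁆ = ⁅(⁅x, z⁆ : L), w⁆ + ⁅z, ⁅x, w⁆⁆ := by rw [leibniz_lie]
      rw [this]
      exact add_mem (hzero (j + 1) _ (hnp x hx z hz) w hw)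
        (hpos j z hz _ (ih x hx w hw))
  have hle : ∀ j, Ws j ≤ ⨆ i : ℕ, Ws i := fun j => le_iSup Ws j
  have main : ∀ x : L, ∀ u ∈ ⨆ j : ℕ, Ws j, ⁅x, u⁆ ∈ ⨆ j : ℕ, Ws j := by
    -- the set of x with this property is a submodule containing Lneg, Lzero, Lpos
    intro x u hu
    have hx : x ∈ (⊤ : Submodule k L) := trivial
    rw [← hsum] at hx
    -- reduce to elements of each piece, using that x acts linearly
    have piece : ∀ y ∈ Lneg ⊔ Lzero ⊔ Lpos, ∀ u ∈ ⨆ j : ℕ, Ws j,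
        ⁅y, u⁆ ∈ ⨆ j : ℕ, Ws j := by
      intro y hy
      have base : ∀ y' : L, (y' ∈ Lneg ∨ y' ∈ Lzero ∨ y' ∈ Lpos) →
          ∀ u ∈ ⨆ j : ℕ, Ws j, ⁅y', u⁆ ∈ ⨆ j : ℕ, Ws j := by
        intro y' hy' u hu
        refine Submodule.iSup_induction Ws (motive := fun v => ⁅y', v⁆ ∈ ⨆ j, Ws j) hu ?_ ?_ ?_
        · intro j w hw
          rcases hy' with h | h | h
          · cases j with
            | zero => rw [hWneg y' h w hw]; exact zero_mem _
            | succ j => exact hle j (hneg j y' h w hw)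
          · exact hle j (hzero j y' h w hw)
          · exact hle (j + 1) (hpos j y' h w hw)
        · show ⁅y', (0:V)⁆ ∈ _; rw [lie_zero]; exact zero_mem _
        · intro a b ha hb; show ⁅y', a + b⁆ ∈ _; rw [lie_add]; exact add_mem ha hb
      -- y ∈ sup of three: use span characterization
      have hy2 : y ∈ Submodule.span k ((Lneg : Set L) ∪ (Lzero : Set L) ∪ (Lpos : Set L)) := by
        rwa [Submodule.span_union, Submodule.span_union, Submodule.span_eq,
          Submodule.span_eq, Submodule.span_eq]
      refine Submodule.span_induction ?_ ?_ ?_ ?_ hy2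
      · rintro y' ((h | h) | h) <;> exact base y' (by tauto)
      · intro u _; rw [zero_lie]; exact zero_mem _
      · intro a b _ _ ha hb u hu; rw [add_lie]; exact add_mem (ha u hu) (hb u hu)
      · intro c a _ ha u hu; rw [smul_lie]; exact Submodule.smul_mem _ _ (ha u hu)
    exact piece x hx u hu
  refine ⟨main, ?_⟩
  intro hirr hW
  rcases hirr _ main with h | h
  · exfalso
    apply hW
    have : Ws 0 ≤ ⊥ := h ▸ hle 0
    exact le_bot_iff.mp this
  · exact h
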